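/- Let u¹,…,uᵐ ∈ ℝⁿ (unit vectors) with weights λ₁,…,λₘ > 0 form a John decomposition, and let x, y ∈ ℝⁿ satisfy ⟨x,uᵢ⟩ ≤ 1 and ⟨y,uᵢ⟩ ≤ 1 for every i ∈ {1,…,m}. Then ‖x − y‖ ≤ √(2·(max{‖x‖², ‖y‖²} + n)), with equality if and only if ‖x‖ = ‖y‖ and ⟨x,y⟩ = −n. -/

import Mathlib

open scoped InnerProductSpace BigOperators

/-- distance bound for points below the supporting hyperplanes of a
John decomposition, with equality characterization. -/
theorem stmt14 (n m : ℕ)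
    (u : Fin m → EuclideanSpace ℝ (Fin n)) (lam : Fin m → ℝ)
    (hu : ∀ i, ‖u i‖ = 1) (hlam : ∀ i, 0 < lam i)
    (hsum : ∑ i, lam i • u i = 0)
    (hdecomp : ∀ z : EuclideanSpace ℝ (Fin n), ∑ i, (lam i * ⟪u i, z⟫_ℝ) • u i = z)
    (x y : EuclideanSpace ℝ (Fin n))
    (hx : ∀ i, ⟪x, u i⟫_ℝ ≤ 1) (hy : ∀ i, ⟪y, u i⟫_ℝ ≤ 1) :
    ‖x - y‖ ≤ Real.sqrt (2 * (max (‖x‖ ^ 2) (‖y‖ ^ 2) + n)) ∧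
    (‖x - y‖ = Real.sqrt (2 * (max (‖x‖ ^ 2) (‖y‖ ^ 2) + n)) ↔
      ‖x‖ = ‖y‖ ∧ ⟪x, y⟫_ℝ = -(n : ℝ)) := by
  -- zero mean against any vector
  have hzero : ∀ z : EuclideanSpace ℝ (Fin n), ∑ i, lam i * ⟪u i, z⟫_ℝ = 0 := by
    intro z
    have := congrArg (fun w : EuclideanSpace ℝ (Fin n) => ⟪w, z⟫_ℝ) hsum
    simpa only [sum_inner, real_inner_smul_left, inner_zero_left] using this
  -- ∑ lam = n
  have hlamsum : ∑ i, lam i = (n : ℝ) := by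
    have key : ∀ j : Fin n, ∑ i, lam i * (u i j) ^ 2 = 1 := by
      intro j
      have hz := hdecomp (EuclideanSpace.single j 1)
      have := congrArg (fun w : EuclideanSpace ℝ (Fin n) =>
        ⟪w, EuclideanSpace.single j 1⟫_ℝ) hz
      simpa [sum_inner, real_inner_smul_left, EuclideanSpace.inner_single_right,
        sq, mul_assoc] using this
    have huj : ∀ i, ∑ j, (u i j) ^ 2 = 1 := by
      intro i
      have h1 : ⟪u i, u i⟫_ℝ = 1 := by
        rw [real_inner_self_eq_norm_sq, hu i]; norm_num
      rw [PiLp.inner_apply] at h1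
      simpa [sq] using h1
    calc ∑ i, lam i = ∑ i, lam i * ∑ j, (u i j) ^ 2 := by
          simp [huj]
      _ = ∑ j, ∑ i, lam i * (u i j) ^ 2 := by
          rw [Finset.sum_comm]; simp [Finset.mul_sum]
      _ = (n : ℝ) := by simp [key]
  -- inner product expansion
  have hxy_eq : ⟪x, y⟫_ℝ = ∑ i, lam i * ⟪u i, y⟫_ℝ * ⟪u i, x⟫_ℝ := by
    have := congrArg (fun w : EuclideanSpace ℝ (Fin n) => ⟪w, x⟫_ℝ) (hdecomp y)
    have h2 : ∑ i, lam i * ⟪u i, y⟫_ℝ * ⟪u i, x⟫_ℝ = ⟪y, x⟫_ℝ := by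
      simpa only [sum_inner, real_inner_smul_left] using this
    rw [real_inner_comm]; exact h2.symm
  -- ⟪x,y⟫ ≥ -n
  have hB : -(n : ℝ) ≤ ⟪x, y⟫_ℝ := by
    have hterm : ∀ i ∈ Finset.univ (α := Fin m),
        0 ≤ lam i * ((1 - ⟪u i, x⟫_ℝ) * (1 - ⟪u i, y⟫_ℝ)) := by
      intro i _
      have h1 : ⟪u i, x⟫_ℝ ≤ 1 := by rw [real_inner_comm]; exact hx i
      have h2 : ⟪u i, y⟫_ℝ ≤ 1 := by rw [real_inner_comm]; exact hy i
      exact mul_nonneg (hlam i).le (mul_nonneg (by linarith) (by linarith))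
    have hpos : 0 ≤ ∑ i, lam i * ((1 - ⟪u i, x⟫_ℝ) * (1 - ⟪u i, y⟫_ℝ)) :=
      Finset.sum_nonneg hterm
    have hexp : ∑ i, lam i * ((1 - ⟪u i, x⟫_ℝ) * (1 - ⟪u i, y⟫_ℝ))
        = (n : ℝ) + ⟪x, y⟫_ℝ := by
      have : ∀ i, lam i * ((1 - ⟪u i, x⟫_ℝ) * (1 - ⟪u i, y⟫_ℝ))
          = lam i - lam i * ⟪u i, x⟫_ℝ - lam i * ⟪u i, y⟫_ℝ
            + lam i * ⟪u i, y⟫_ℝ * ⟪u i, x⟫_ℝ := by intro i; ring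
      rw [Finset.sum_congr rfl (fun i _ => this i)]
      rw [Finset.sum_add_distrib, Finset.sum_sub_distrib, Finset.sum_sub_distrib]
      rw [hzero x, hzero y, hlamsum, ← hxy_eq]; ring
    linarith [hexp ▸ hpos]
  set M := max (‖x‖ ^ 2) (‖y‖ ^ 2) with hM
  have hA : ‖x‖ ^ 2 + ‖y‖ ^ 2 ≤ 2 * M :=
    by have := le_max_left (‖x‖ ^ 2) (‖y‖ ^ 2)
       have := le_max_right (‖x‖ ^ 2) (‖y‖ ^ 2)
       linarith
  have hns : ‖x - y‖ ^ 2 = ‖x‖ ^ 2 - 2 * ⟪x, y⟫_ℝ + ‖y‖ ^ 2 := norm_sub_sq_real x y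
  have hM0 : 0 ≤ M := le_trans (sq_nonneg ‖x‖) (le_max_left _ _)
  have hR0 : 0 ≤ 2 * (M + n) := by positivity
  have hsqle : ‖x - y‖ ^ 2 ≤ 2 * (M + n) := by nlinarith
  constructor
  · calc ‖x - y‖ = Real.sqrt (‖x - y‖ ^ 2) := (Real.sqrt_sq (norm_nonneg _)).symm
      _ ≤ Real.sqrt (2 * (M + n)) := Real.sqrt_le_sqrt hsqle
  · constructor
    · intro h
      have hsq : ‖x - y‖ ^ 2 = 2 * (M + n) := by
        rw [h, Real.sq_sqrt hR0]
      have hinner : ⟪x, y⟫_ℝ = -(n : ℝ) := by nlinarith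
      have hnorm2 : ‖x‖ ^ 2 = ‖y‖ ^ 2 := by
        have hAeq : ‖x‖ ^ 2 + ‖y‖ ^ 2 = 2 * M := by nlinarith
        rcases le_total (‖x‖ ^ 2) (‖y‖ ^ 2) with hc | hc
        · rw [hM, max_eq_right hc] at hAeq; linarith
        · rw [hM, max_eq_left hc] at hAeq; linarith
      have : ‖x‖ = ‖y‖ := by
        have := congrArg Real.sqrt hnorm2
        rwa [Real.sqrt_sq (norm_nonneg _), Real.sqrt_sq (norm_nonneg _)] at this
      exact ⟨this, hinner⟩
    · rintro ⟨h1, h2⟩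
      have hMx : M = ‖x‖ ^ 2 := by rw [hM, h1, max_self]
      have hsq : ‖x - y‖ ^ 2 = 2 * (M + n) := by
        rw [hns, h2, hMx, h1]; ring
      rw [← hsq, Real.sqrt_sq (norm_nonneg _)]
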